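/- arXiv:2405.19412 — 3 statements merged into one kernel-verified Lean document; each statement's English description precedes it below -/
import Mathlib

section
/- Let u_a(t) = exp(-a·t/ln²(t)) for t > 1 and a > 0. For all integers k ≥ 0 and all t ≥ e⁴ such that a·t/ln²(t) ≥ 2k+2, one has ∫_t^∞ τ^k · u_a(τ) dτ ≤ ((2k+3)/a) · t^{2k+2} · u_a(t). -/
open Real Set Filter MeasureTheory Topology

private lemma hasDerivAt_pow' (k : ℕ) {x : ℝ} (hx : x ≠ 0) :
    HasDerivAt (fun y : ℝ => y ^ k) ((k : ℝ) * x ^ k / x) x := by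
  have h : HasDerivAt (fun y : ℝ => y ^ k) ((k:ℝ) * x ^ (k - 1)) x := hasDerivAt_pow k x
  convert h using 1
  cases k with
  | zero => simp
  | succ n => rw [pow_succ]; field_simp; simp

private lemma log_le_two_sqrt {x : ℝ} (hx : 1 ≤ x) : Real.log x ≤ 2 * Real.sqrt x := by
  have h0 : (0:ℝ) < x := lt_of_lt_of_le one_pos hx
  have h1 : Real.log x = 2 * Real.log (Real.sqrt x) := by
    rw [Real.log_sqrt h0.le]; ring
  have h2 : Real.log (Real.sqrt x) ≤ Real.sqrt x - 1 :=
    Real.log_le_sub_one_of_pos (Real.sqrt_pos.2 h0)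
  nlinarith [Real.sqrt_nonneg x]

private lemma sq_log_le {x : ℝ} (hx : 1 ≤ x) : (Real.log x) ^ 2 ≤ 16 * Real.sqrt x := by
  have h0 : (0:ℝ) < x := lt_of_lt_of_le one_pos hx
  have hs1 : 1 ≤ Real.sqrt x := by
    rw [show (1:ℝ) = Real.sqrt 1 by simp]; exact Real.sqrt_le_sqrt hx
  have h1 : Real.log x = 2 * Real.log (Real.sqrt x) := by
    rw [Real.log_sqrt h0.le]; ring
  have h2 : Real.log (Real.sqrt x) ≤ 2 * Real.sqrt (Real.sqrt x) := log_le_two_sqrt hs1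
  have h3 : (Real.sqrt (Real.sqrt x))^2 = Real.sqrt x := Real.sq_sqrt (Real.sqrt_nonneg x)
  have h4 : 0 ≤ Real.log x := Real.log_nonneg hx
  nlinarith [Real.sqrt_nonneg (Real.sqrt x)]

private lemma div_logsq_mono :
    MonotoneOn (fun x : ℝ => x / (Real.log x) ^ 2) (Ici (Real.exp 2)) := by
  have key : ∀ x ∈ Ici (Real.exp 2), x ≠ 0 ∧ Real.log x ≠ 0 := by
    intro x hx
    have h2 : Real.exp 2 ≤ x := hx
    have hx0 : (0:ℝ) < x := lt_of_lt_of_le (Real.exp_pos 2) h2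
    have hl : (2:ℝ) ≤ Real.log x := by
      rw [show (2:ℝ) = Real.log (Real.exp 2) by simp]
      exact Real.log_le_log (Real.exp_pos 2) h2
    exact ⟨hx0.ne', by positivity⟩
  have hd : ∀ x ∈ Ici (Real.exp 2), HasDerivAt (fun x : ℝ => x / (Real.log x) ^ 2)
      ((Real.log x - 2) / (Real.log x) ^ 3) x := by
    intro x hx
    obtain ⟨hx0, hl0⟩ := key x hx
    have h1 : HasDerivAt (fun x : ℝ => (Real.log x) ^ 2) (2 * Real.log x ^ 1 * x⁻¹) x :=
      (Real.hasDerivAt_log hx0).pow 2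
    have h2 : HasDerivAt (fun y : ℝ => y / (Real.log y) ^ 2)
        ((1 * Real.log x ^ 2 - x * (2 * Real.log x ^ 1 * x⁻¹)) / (Real.log x ^ 2) ^ 2) x :=
      (hasDerivAt_id x).div h1 (by positivity)
    convert h2 using 1
    field_simp
  apply monotoneOn_of_deriv_nonneg (convex_Ici _)
  · exact fun x hx => ((hd x hx).continuousAt.continuousWithinAt)
  · intro x hx
    exact ((hd x (interior_subset hx)).differentiableAt).differentiableWithinAt
  · intro x hx
    rw [interior_Ici] at hx
    have hx' : Real.exp 2 < x := hx
    have hl : (2:ℝ) < Real.log x := by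
      rw [show (2:ℝ) = Real.log (Real.exp 2) by simp]
      exact Real.log_lt_log (Real.exp_pos 2) hx'
    rw [(hd x (le_of_lt hx')).deriv]
    have h0 : (0:ℝ) < Real.log x := by linarith
    apply div_nonneg (by linarith) (by positivity)

private lemma hasDerivAt_G (a : ℝ) (ha : a ≠ 0) (k : ℕ) {x : ℝ} (hx0 : 0 < x)
    (hl : 4 ≤ Real.log x) :
    HasDerivAt (fun y : ℝ => (2*(k:ℝ)+2)/a *
        (y ^ k * ((Real.log y)^3 / (Real.log y - 2)) * Real.exp (-(a*y)/(Real.log y)^2)))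
      (-((2*(k:ℝ)+2) * Real.exp (-(a*x)/(Real.log x)^2) *
        (x ^ k - x ^ k * ((Real.log x)^2 * ((k:ℝ)*(Real.log x)^2 - 2*(k:ℝ)*(Real.log x)
          + 2*(Real.log x) - 6)) / (a * x * (Real.log x - 2)^2)))) x := by
  have hxne : x ≠ 0 := hx0.ne'
  have hlpos : (0:ℝ) < Real.log x := by linarith
  have hlne : Real.log x ≠ 0 := hlpos.ne'
  have hl2 : Real.log x - 2 ≠ 0 := by intro h; nlinarith
  have hlog := Real.hasDerivAt_log hxne
  have hp : HasDerivAt (fun y : ℝ => y ^ k) ((k:ℝ) * x ^ k / x) x := hasDerivAt_pow' k hxne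
  have hl3 : HasDerivAt (fun y : ℝ => (Real.log y)^3) (3 * (Real.log x)^2 * x⁻¹) x := by
    have : HasDerivAt (fun y : ℝ => (Real.log y)^3) ((3:ℕ) * (Real.log x)^(3-1) * x⁻¹) x :=
      hlog.pow 3
    convert this using 1; norm_num
  have hlsub : HasDerivAt (fun y : ℝ => Real.log y - 2) (x⁻¹) x := hlog.sub_const 2
  have hR : HasDerivAt (fun y : ℝ => (Real.log y)^3 / (Real.log y - 2))
      ((3 * (Real.log x)^2 * x⁻¹ * (Real.log x - 2) - (Real.log x)^3 * x⁻¹) / (Real.log x - 2)^2)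
      x := hl3.div hlsub hl2
  have hnum : HasDerivAt (fun y : ℝ => a * y) a x := by
    simpa using (hasDerivAt_id x).const_mul a
  have hl2' : HasDerivAt (fun y : ℝ => (Real.log y)^2) (2 * (Real.log x) * x⁻¹) x := by
    have : HasDerivAt (fun y : ℝ => (Real.log y)^2) ((2:ℕ) * (Real.log x)^(2-1) * x⁻¹) x :=
      hlog.pow 2
    convert this using 1; norm_num
  have hq : HasDerivAt (fun y : ℝ => -((a*y) / (Real.log y)^2))
      (-((a * (Real.log x)^2 - (a*x) * (2 * Real.log x * x⁻¹)) / ((Real.log x)^2)^2)) x :=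
    (hnum.div hl2' (by positivity)).neg
  have hE : HasDerivAt (fun y : ℝ => Real.exp (-(a*y)/(Real.log y)^2))
      (Real.exp (-(a*x)/(Real.log x)^2) *
        (-((a * (Real.log x)^2 - (a*x) * (2 * Real.log x * x⁻¹)) / ((Real.log x)^2)^2))) x := by
    have := hq.exp
    convert this using 1
    · funext y; rw [neg_div]
    · rw [neg_div]
  have hfull : HasDerivAt (fun y : ℝ => (2*(k:ℝ)+2)/a *
          (y ^ k * ((Real.log y)^3 / (Real.log y - 2)) * Real.exp (-(a*y)/(Real.log y)^2)))
      ((2*(k:ℝ)+2)/a * (((k:ℝ) * x ^ k / x * ((Real.log x)^3 / (Real.log x - 2)) +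
          x ^ k * ((3 * (Real.log x)^2 * x⁻¹ * (Real.log x - 2) - (Real.log x)^3 * x⁻¹)
            / (Real.log x - 2)^2)) * Real.exp (-(a*x)/(Real.log x)^2) +
        x ^ k * ((Real.log x)^3 / (Real.log x - 2)) * (Real.exp (-(a*x)/(Real.log x)^2) *
          (-((a * (Real.log x)^2 - (a*x) * (2 * Real.log x * x⁻¹)) / ((Real.log x)^2)^2))))) x :=
    (((hp.mul hR).mul hE).const_mul ((2*(k:ℝ)+2)/a))
  convert hfull using 1
  field_simp
  ring

private lemma tendsto_G (a : ℝ) (ha : 0 < a) (k : ℕ) :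
    Tendsto (fun y : ℝ => (2*(k:ℝ)+2)/a *
        (y ^ k * ((Real.log y)^3 / (Real.log y - 2)) * Real.exp (-(a*y)/(Real.log y)^2)))
      atTop (𝓝 0) := by
  have ha' : a ≠ 0 := ha.ne'
  set C : ℝ := 64*((k:ℝ)+1)/a with hC
  have hsqrt : Tendsto Real.sqrt atTop atTop :=
    (tendsto_rpow_atTop (by norm_num : (0:ℝ) < 1/2)).congr
      (fun x => (Real.sqrt_eq_rpow x).symm)
  have hy : Tendsto (fun y : ℝ => C * y^(2*k+1) * Real.exp (-(a/16)*y)) atTop (𝓝 0) := by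
    have h0 : Tendsto (fun z : ℝ => z^(2*k+1) * Real.exp (-z)) atTop (𝓝 0) :=
      Real.tendsto_pow_mul_exp_neg_atTop_nhds_zero _
    have hlin : Tendsto (fun y : ℝ => (a/16)*y) atTop atTop :=
      Tendsto.const_mul_atTop (by positivity) tendsto_id
    have h1 := (h0.comp hlin).const_mul (C * (16/a)^(2*k+1))
    rw [mul_zero] at h1
    apply h1.congr
    intro y
    simp only [Function.comp_apply]
    rw [mul_pow]
    have h2 : (16/a)^(2*k+1) * ((a/16)^(2*k+1)) = 1 := by
      rw [← mul_pow]; field_simp; exact one_pow _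
    calc C * (16/a)^(2*k+1) * ((a/16)^(2*k+1) * y^(2*k+1) * Real.exp (-((a/16)*y)))
        = (C * y^(2*k+1) * Real.exp (-((a/16)*y))) * ((16/a)^(2*k+1) * ((a/16)^(2*k+1))) := by
          ring
      _ = C * y^(2*k+1) * Real.exp (-(a/16)*y) := by rw [h2, mul_one, neg_mul]
  have hM : Tendsto (fun x : ℝ => C * (Real.sqrt x)^(2*k+1) * Real.exp (-(a/16)*Real.sqrt x))
      atTop (𝓝 0) := hy.comp hsqrt
  apply squeeze_zero' _ _ hM
  · filter_upwards [eventually_ge_atTop (Real.exp 4)] with x hx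
    have hx0 : (0:ℝ) < x := lt_of_lt_of_le (Real.exp_pos 4) hx
    have hl : (4:ℝ) ≤ Real.log x := by
      rw [show (4:ℝ) = Real.log (Real.exp 4) by simp]
      exact Real.log_le_log (Real.exp_pos 4) hx
    have h1 : (0:ℝ) < Real.log x - 2 := by linarith
    positivity
  · filter_upwards [eventually_ge_atTop (Real.exp 4)] with x hx
    have hx0 : (0:ℝ) < x := lt_of_lt_of_le (Real.exp_pos 4) hx
    have hx1 : (1:ℝ) ≤ x := le_trans (by nlinarith [Real.add_one_le_exp (4:ℝ)]) hx
    have hl : (4:ℝ) ≤ Real.log x := by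
      rw [show (4:ℝ) = Real.log (Real.exp 4) by simp]
      exact Real.log_le_log (Real.exp_pos 4) hx
    have h1 : (0:ℝ) < Real.log x - 2 := by linarith
    have hsx : (0:ℝ) < Real.sqrt x := Real.sqrt_pos.2 hx0
    have hsq : (Real.sqrt x)^2 = x := Real.sq_sqrt hx0.le
    have hxk : x ^ k = (Real.sqrt x)^(2*k) := by
      rw [pow_mul, hsq]
    have hR : (Real.log x)^3 / (Real.log x - 2) ≤ 2 * (Real.log x)^2 := by
      rw [div_le_iff₀ h1]; nlinarith
    have hL2 : (Real.log x)^2 ≤ 16 * Real.sqrt x := sq_log_le hx1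
    have hE : Real.exp (-(a*x)/(Real.log x)^2) ≤ Real.exp (-(a/16)*Real.sqrt x) := by
      apply Real.exp_le_exp.2
      rw [neg_div, neg_mul, neg_le_neg_iff]
      rw [le_div_iff₀ (by positivity : (0:ℝ) < (Real.log x)^2)]
      calc a/16*Real.sqrt x * (Real.log x)^2 ≤ a/16*Real.sqrt x * (16*Real.sqrt x) := by
            apply mul_le_mul_of_nonneg_left hL2 (by positivity)
        _ = a * x := by
            rw [show a/16*Real.sqrt x * (16*Real.sqrt x) = a * (Real.sqrt x^2) by ring, hsq]
    have hEpos : (0:ℝ) < Real.exp (-(a*x)/(Real.log x)^2) := Real.exp_pos _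
    calc (2*(k:ℝ)+2)/a * (x ^ k * ((Real.log x)^3 / (Real.log x - 2))
            * Real.exp (-(a*x)/(Real.log x)^2))
        ≤ (2*(k:ℝ)+2)/a * ((Real.sqrt x)^(2*k) * (2*(Real.log x)^2)
            * Real.exp (-(a/16)*Real.sqrt x)) := by
          rw [hxk]
          apply mul_le_mul_of_nonneg_left _ (by positivity)
          apply mul_le_mul
          · exact mul_le_mul_of_nonneg_left hR (by positivity)
          · exact hE
          · positivity
          · positivity
      _ ≤ (2*(k:ℝ)+2)/a * ((Real.sqrt x)^(2*k) * (2*(16*Real.sqrt x))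
            * Real.exp (-(a/16)*Real.sqrt x)) := by
          apply mul_le_mul_of_nonneg_left _ (by positivity)
          apply mul_le_mul_of_nonneg_right _ (by positivity)
          apply mul_le_mul_of_nonneg_left _ (by positivity)
          linarith
      _ = C * (Real.sqrt x)^(2*k+1) * Real.exp (-(a/16)*Real.sqrt x) := by
          rw [hC, pow_succ]
          field_simp
          ring

private lemma pointwise_le (a : ℝ) (ha : 0 < a) (k : ℕ) {x : ℝ} (hx0 : 0 < x)
    (hl : 4 ≤ Real.log x) (hax : (2*(k:ℝ)+2) * (Real.log x)^2 ≤ a * x) :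
    x ^ k * Real.exp (-(a*x)/(Real.log x)^2) ≤
      (2*(k:ℝ)+2) * Real.exp (-(a*x)/(Real.log x)^2) *
        (x ^ k - x ^ k * ((Real.log x)^2 * ((k:ℝ)*(Real.log x)^2 - 2*(k:ℝ)*(Real.log x)
          + 2*(Real.log x) - 6)) / (a * x * (Real.log x - 2)^2)) := by
  set L := Real.log x with hLdef
  have hk0 : (0:ℝ) ≤ (k:ℝ) := Nat.cast_nonneg k
  have hden : (0:ℝ) < a * x * (L - 2)^2 := by
    have : (0:ℝ) < L - 2 := by linarith
    positivity
  have hN : (k:ℝ)*L^2 - 2*(k:ℝ)*L + 2*L - 6 ≤ (2*(k:ℝ)+1)*(L-2)^2 := by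
    have h1 : (0:ℝ) ≤ (L-4)*(L-2) := by nlinarith
    have h2 : (1:ℝ) ≤ (L-3)^2 := by nlinarith
    nlinarith [mul_nonneg hk0 (by linarith : (0:ℝ) ≤ (L-3)^2 - 1)]
  have hQ : (2*(k:ℝ)+2) * (L^2 * ((k:ℝ)*L^2 - 2*(k:ℝ)*L + 2*L - 6) / (a * x * (L - 2)^2))
      ≤ 2*(k:ℝ)+1 := by
    rw [mul_div_assoc', div_le_iff₀ hden]
    have hL2 : (0:ℝ) ≤ L^2 := sq_nonneg L
    have t1 : (2*(k:ℝ)+2) * (L^2 * ((k:ℝ)*L^2 - 2*(k:ℝ)*L + 2*L - 6))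
        ≤ (2*(k:ℝ)+2) * (L^2 * ((2*(k:ℝ)+1)*(L-2)^2)) := by
      apply mul_le_mul_of_nonneg_left _ (by positivity)
      exact mul_le_mul_of_nonneg_left hN hL2
    have t2 : (2*(k:ℝ)+2) * (L^2 * ((2*(k:ℝ)+1)*(L-2)^2))
        = (2*(k:ℝ)+1) * ((2*(k:ℝ)+2) * L^2) * (L-2)^2 := by ring
    have t3 : (2*(k:ℝ)+1) * ((2*(k:ℝ)+2) * L^2) * (L-2)^2
        ≤ (2*(k:ℝ)+1) * (a*x) * (L-2)^2 := by
      apply mul_le_mul_of_nonneg_right _ (sq_nonneg _)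
      exact mul_le_mul_of_nonneg_left hax (by positivity)
    calc (2*(k:ℝ)+2) * (L^2 * ((k:ℝ)*L^2 - 2*(k:ℝ)*L + 2*L - 6))
        ≤ (2*(k:ℝ)+1) * ((2*(k:ℝ)+2) * L^2) * (L-2)^2 := by rw [← t2]; exact t1
      _ ≤ (2*(k:ℝ)+1) * (a*x) * (L-2)^2 := t3
      _ = (2*(k:ℝ)+1) * (a*x*(L-2)^2) := by ring
  have hxk : (0:ℝ) < x ^ k := pow_pos hx0 k
  have hE : (0:ℝ) < Real.exp (-(a*x)/L^2) := Real.exp_pos _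
  set Q := L^2 * ((k:ℝ)*L^2 - 2*(k:ℝ)*L + 2*L - 6) / (a * x * (L - 2)^2) with hQdef
  have h1 : x ^ k ≤ (2*(k:ℝ)+2) * (x ^ k - x ^ k * Q) := by
    have := mul_le_mul_of_nonneg_left hQ hxk.le
    nlinarith
  have h2 : x ^ k * ((Real.log x)^2 * ((k:ℝ)*(Real.log x)^2 - 2*(k:ℝ)*(Real.log x)
      + 2*(Real.log x) - 6)) / (a * x * (Real.log x - 2)^2) = x ^ k * Q := by
    rw [hQdef, ← hLdef, mul_div_assoc]
  rw [h2]
  calc x ^ k * Real.exp (-(a*x)/L^2)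
      ≤ ((2*(k:ℝ)+2) * (x ^ k - x ^ k * Q)) * Real.exp (-(a*x)/L^2) :=
        mul_le_mul_of_nonneg_right h1 hE.le
    _ = (2*(k:ℝ)+2) * Real.exp (-(a*x)/L^2) * (x ^ k - x ^ k * Q) := by ring

/-- Tail integral bound for `u_a(t) = exp(-a·t/ln²(t))`: for integers `k ≥ 0` and
`t ≥ e⁴` with `a·t/ln²(t) ≥ 2k+2`,
`∫_t^∞ τ^k u_a(τ) dτ ≤ ((2k+3)/a) t^(2k+2) u_a(t)`. -/
theorem integral_ua_tail_bound (a : ℝ) (ha : 0 < a) (k : ℕ) (t : ℝ)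
    (ht : Real.exp 4 ≤ t)
    (hkt : (2 * k + 2 : ℝ) ≤ a * t / (Real.log t) ^ 2) :
    ∫ τ in Set.Ioi t, τ ^ k * Real.exp (-a * τ / (Real.log τ) ^ 2) ≤
      ((2 * k + 3 : ℝ) / a) * t ^ (2 * k + 2) * Real.exp (-a * t / (Real.log t) ^ 2) := by
  have ha' : a ≠ 0 := ha.ne'
  have ht0 : (0:ℝ) < t := lt_of_lt_of_le (Real.exp_pos 4) ht
  have ht1 : (1:ℝ) ≤ t := le_trans (by nlinarith [Real.add_one_le_exp (4:ℝ)]) ht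
  have hlt : (4:ℝ) ≤ Real.log t := by
    rw [show (4:ℝ) = Real.log (Real.exp 4) by simp]
    exact Real.log_le_log (Real.exp_pos 4) ht
  simp only [neg_mul]
  -- facts valid for all x ≥ t
  have hfacts : ∀ x : ℝ, t ≤ x →
      0 < x ∧ 4 ≤ Real.log x ∧ (2*(k:ℝ)+2) * (Real.log x)^2 ≤ a * x := by
    intro x hx
    have hx0 : (0:ℝ) < x := lt_of_lt_of_le ht0 hx
    have hlx : (4:ℝ) ≤ Real.log x := by
      rw [show (4:ℝ) = Real.log (Real.exp 4) by simp]
      exact Real.log_le_log (Real.exp_pos 4) (le_trans ht hx)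
    have he24 : Real.exp 2 ≤ Real.exp 4 := Real.exp_le_exp.2 (by norm_num)
    have htmem : t ∈ Ici (Real.exp 2) := le_trans he24 ht
    have hxmem : x ∈ Ici (Real.exp 2) := le_trans (le_trans he24 ht) hx
    have hmono := div_logsq_mono htmem hxmem hx
    have hlx2 : (0:ℝ) < (Real.log x)^2 := by positivity
    have hkx : (2*(k:ℝ)+2) ≤ a * x / (Real.log x)^2 := by
      have e1 : a * t / (Real.log t)^2 = a * (t / (Real.log t)^2) := by ring
      have e2 : a * x / (Real.log x)^2 = a * (x / (Real.log x)^2) := by ring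
      have := mul_le_mul_of_nonneg_left hmono ha.le
      calc (2*(k:ℝ)+2) ≤ a * t / (Real.log t)^2 := hkt
        _ ≤ a * x / (Real.log x)^2 := by rw [e1, e2]; exact this
    exact ⟨hx0, hlx, by rw [← le_div_iff₀ hlx2]; exact hkx⟩
  -- the comparison function and its derivative
  set G : ℝ → ℝ := fun y => (2*(k:ℝ)+2)/a *
      (y ^ k * ((Real.log y)^3 / (Real.log y - 2)) * Real.exp (-(a*y)/(Real.log y)^2))
    with hGdef
  set gp : ℝ → ℝ := fun x => (2*(k:ℝ)+2) * Real.exp (-(a*x)/(Real.log x)^2) *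
      (x ^ k - x ^ k * ((Real.log x)^2 * ((k:ℝ)*(Real.log x)^2 - 2*(k:ℝ)*(Real.log x)
        + 2*(Real.log x) - 6)) / (a * x * (Real.log x - 2)^2))
    with hgpdef
  have hderiv : ∀ x ∈ Ici t, HasDerivAt (fun y => -(G y)) (gp x) x := by
    intro x hx
    obtain ⟨hx0, hlx, _⟩ := hfacts x hx
    have h := (hasDerivAt_G a ha' k hx0 hlx).neg
    rw [neg_neg] at h
    exact h
  have hfle : ∀ x ∈ Ioi t, x ^ k * Real.exp (-(a*x)/(Real.log x)^2) ≤ gp x := by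
    intro x hx
    obtain ⟨hx0, hlx, hax⟩ := hfacts x (le_of_lt hx)
    exact pointwise_le a ha k hx0 hlx hax
  have hgp_nonneg : ∀ x ∈ Ioi t, 0 ≤ gp x := by
    intro x hx
    obtain ⟨hx0, hlx, hax⟩ := hfacts x (le_of_lt hx)
    exact le_trans (by positivity) (hfle x hx)
  have htend : Tendsto (fun y => -(G y)) atTop (𝓝 0) := by
    have := (tendsto_G a ha k).neg
    rw [neg_zero] at this
    exact this
  have hint : ∫ x in Ioi t, gp x = 0 - (-(G t)) :=
    integral_Ioi_of_hasDerivAt_of_nonneg' hderiv hgp_nonneg htend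
  have hintg : IntegrableOn gp (Ioi t) :=
    integrableOn_Ioi_deriv_of_nonneg' hderiv hgp_nonneg htend
  have hf_meas : AEStronglyMeasurable
      (fun τ : ℝ => τ ^ k * Real.exp (-(a*τ)/(Real.log τ)^2))
      (volume.restrict (Ioi t)) := by
    apply Measurable.aestronglyMeasurable
    exact (measurable_id.pow_const k).mul
      (Real.measurable_exp.comp (((measurable_const.mul measurable_id).neg).div
        (Real.measurable_log.pow_const 2)))
  have hf_int : IntegrableOn (fun τ : ℝ => τ ^ k * Real.exp (-(a*τ)/(Real.log τ)^2)) (Ioi t) := by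
    apply Integrable.mono' hintg hf_meas
    rw [ae_restrict_iff' measurableSet_Ioi]
    filter_upwards with x hx
    obtain ⟨hx0, _, _⟩ := hfacts x (le_of_lt hx)
    rw [Real.norm_eq_abs, abs_of_nonneg (by positivity)]
    exact hfle x hx
  have hboundint : ∫ τ in Ioi t, τ ^ k * Real.exp (-(a*τ)/(Real.log τ)^2) ≤ G t := by
    calc ∫ τ in Ioi t, τ ^ k * Real.exp (-(a*τ)/(Real.log τ)^2)
        ≤ ∫ x in Ioi t, gp x := setIntegral_mono_on hf_int hintg measurableSet_Ioi hfle
      _ = G t := by rw [hint]; ring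
  refine le_trans hboundint ?_
  -- final bound : G t ≤ RHS
  have hEpos : (0:ℝ) < Real.exp (-(a*t)/(Real.log t)^2) := Real.exp_pos _
  have hl1 : (0:ℝ) < Real.log t - 2 := by linarith
  have hsq4 : (Real.log t)^2 ≤ 4 * t := by
    have h1 := log_le_two_sqrt ht1
    have h2 : (Real.sqrt t)^2 = t := Real.sq_sqrt ht0.le
    have h3 : (0:ℝ) ≤ Real.log t := by linarith
    nlinarith [Real.sqrt_nonneg t]
  have hR : (Real.log t)^3 / (Real.log t - 2) ≤ 8 * t := by
    rw [div_le_iff₀ hl1]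
    nlinarith [hsq4, hlt]
  have ht8 : (8:ℝ) ≤ t ^ (k+1) := by
    have h9 : (9:ℝ) ≤ Real.exp 4 := by
      have h3 : (3:ℝ) ≤ Real.exp 2 := by nlinarith [Real.add_one_le_exp (2:ℝ)]
      have : Real.exp 4 = Real.exp 2 * Real.exp 2 := by rw [← Real.exp_add]; norm_num
      nlinarith
    have htp : t ≤ t ^ (k+1) := by
      calc t = t ^ 1 := (pow_one t).symm
        _ ≤ t ^ (k+1) := pow_le_pow_right₀ ht1 (by omega)
    linarith
  have hkey : (2*(k:ℝ)+2) * (t ^ k * ((Real.log t)^3 / (Real.log t - 2)))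
      ≤ (2*(k:ℝ)+3) * t ^ (2*k+2) := by
    have htk : (0:ℝ) < t ^ k := pow_pos ht0 k
    have htk1 : (0:ℝ) < t ^ (k+1) := pow_pos ht0 _
    calc (2*(k:ℝ)+2) * (t ^ k * ((Real.log t)^3 / (Real.log t - 2)))
        ≤ (2*(k:ℝ)+2) * (t ^ k * (8*t)) := by
          apply mul_le_mul_of_nonneg_left _ (by positivity)
          exact mul_le_mul_of_nonneg_left hR htk.le
      _ = (16*(k:ℝ)+16) * t ^ (k+1) := by rw [pow_succ]; ring
      _ ≤ ((2*(k:ℝ)+3) * t ^ (k+1)) * t ^ (k+1) := by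
          have h1 : (16*(k:ℝ)+16) ≤ (2*(k:ℝ)+3) * t ^ (k+1) := by
            nlinarith [mul_nonneg (show (0:ℝ) ≤ 2*(k:ℝ)+3 by positivity)
              (by linarith : (0:ℝ) ≤ t ^ (k+1) - 8)]
          exact mul_le_mul_of_nonneg_right h1 htk1.le
      _ = (2*(k:ℝ)+3) * t ^ (2*k+2) := by
          rw [mul_assoc, ← pow_add]
          congr 2
          omega
  have hfinal : G t ≤ ((2 * (k:ℝ) + 3) / a) * t ^ (2 * k + 2)
      * Real.exp (-(a*t)/(Real.log t)^2) := by
    simp only [hGdef]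
    have e1 : (2*(k:ℝ)+2)/a * (t ^ k * ((Real.log t)^3 / (Real.log t - 2))
        * Real.exp (-(a*t)/(Real.log t)^2))
        = ((2*(k:ℝ)+2) * (t ^ k * ((Real.log t)^3 / (Real.log t - 2))) / a)
          * Real.exp (-(a*t)/(Real.log t)^2) := by ring
    have e2 : ((2 * (k:ℝ) + 3) / a) * t ^ (2 * k + 2) * Real.exp (-(a*t)/(Real.log t)^2)
        = ((2*(k:ℝ)+3) * t ^ (2*k+2) / a) * Real.exp (-(a*t)/(Real.log t)^2) := by ring
    rw [e1, e2]
    apply mul_le_mul_of_nonneg_right _ hEpos.le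
    exact div_le_div_of_nonneg_right hkey ha.le
  exact hfinal
end

section
/- Let F : ℝ → ℝ be integrable with ∫_ℝ |F(t)| dt ≤ c₂, and suppose ∫_{|t'|>t} |F(t')| dt' ≤ c'·η_a(t) for all t ≥ 0. Let g : ℝ → [0,∞) satisfy g(t) ≤ min(2M, c·M·e^{μ(v|t| - d)}) for all t, where M, c, μ, v, d > 0. Then ∫_ℝ |F(t)|·g(t) dt ≤ C·M·η_a(d/(2v)) for a constant C depending only on c, c', c₂, μ, v, a (and not on d or M). -/
open MeasureTheory

lemma eta_aux (a b s : ℝ) (ha : 0 < a) (hb : 0 < b) (hs : 0 ≤ s) :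
    a * s / (Real.log (Real.exp 2 + s)) ^ 2 ≤ a * Real.exp (Real.sqrt (a / b)) + b * s := by
  set s₀ := Real.exp (Real.sqrt (a / b)) with hs₀
  have hs₀pos : 0 < s₀ := Real.exp_pos _
  have hL2 : (2:ℝ) ≤ Real.log (Real.exp 2 + s) := by
    calc (2:ℝ) = Real.log (Real.exp 2) := (Real.log_exp 2).symm
    _ ≤ Real.log (Real.exp 2 + s) := Real.log_le_log (Real.exp_pos 2) (by linarith)
  have hLpos : 0 < Real.log (Real.exp 2 + s) := by linarith
  rcases le_total s s₀ with h | h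
  · have h1 : a * s / (Real.log (Real.exp 2 + s)) ^ 2 ≤ a * s := by
      apply div_le_self (by positivity)
      nlinarith
    nlinarith [mul_nonneg hb.le hs]
  · have hlog : Real.sqrt (a / b) ≤ Real.log (Real.exp 2 + s) := by
      have hle : s₀ ≤ Real.exp 2 + s := by nlinarith [Real.exp_pos 2]
      calc Real.sqrt (a / b) = Real.log s₀ := (Real.log_exp _).symm
      _ ≤ Real.log (Real.exp 2 + s) := Real.log_le_log hs₀pos hle
    have hL2' : a / b ≤ (Real.log (Real.exp 2 + s)) ^ 2 := by
      have h0 : 0 ≤ Real.sqrt (a / b) := Real.sqrt_nonneg _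
      calc a / b = Real.sqrt (a / b) ^ 2 := (Real.sq_sqrt (by positivity)).symm
      _ ≤ (Real.log (Real.exp 2 + s)) ^ 2 := by nlinarith
    have hab : a ≤ (Real.log (Real.exp 2 + s)) ^ 2 * b := by
      rw [← div_le_iff₀ hb] at *
      linarith [hL2']
    have hmain : a * s / (Real.log (Real.exp 2 + s)) ^ 2 ≤ b * s := by
      rw [div_le_iff₀ (by positivity)]
      nlinarith [mul_le_mul_of_nonneg_right hab hs]
    nlinarith [mul_nonneg ha.le hs₀pos.le]

/-- Analytic core of the Lieb-Robinson bound for filtered interactions: if `F` has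
`∫|F| ≤ c₂` and tails `∫_{|t'|>t}|F| ≤ c'·η_a(t)`, and `g ≤ min(2M, cM e^{μ(v|t|-d)})`,
then `∫ |F(t)|g(t) dt ≤ C·M·η_a(d/(2v))` with `C` independent of `d` and `M`. -/
theorem filtered_LR_integral (a c c' c₂ μ v : ℝ)
    (ha : 0 < a) (hc : 0 < c) (hc' : 0 < c') (hc₂ : 0 < c₂) (hμ : 0 < μ) (hv : 0 < v) :
    ∃ C > 0, ∀ (F g : ℝ → ℝ) (M d : ℝ), 0 < M → 0 < d →
      Integrable F →
      (∫ t, |F t|) ≤ c₂ →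
      (∀ t : ℝ, 0 ≤ t → (∫ t' in {t' : ℝ | t < |t'|}, |F t'|) ≤
          c' * Real.exp (-a * t / (Real.log (Real.exp 2 + t)) ^ 2)) →
      Measurable g →
      (∀ t, 0 ≤ g t) →
      (∀ t : ℝ, g t ≤ min (2 * M) (c * M * Real.exp (μ * (v * |t| - d)))) →
      (∫ t, |F t| * g t) ≤
        C * M * Real.exp (-a * (d / (2 * v)) /
          (Real.log (Real.exp 2 + d / (2 * v))) ^ 2) := by
  refine ⟨c * c₂ * Real.exp (a * Real.exp (Real.sqrt (a / (μ * v)))) + 2 * c',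
    by positivity, ?_⟩
  intro F g M d hM hd hF hFc₂ hFtail hgm hg0 hgb
  set s₀ := Real.exp (Real.sqrt (a / (μ * v))) with hs₀def
  set s := d / (2 * v) with hsdef
  have hspos : 0 < s := by positivity
  set η := Real.exp (-a * s / (Real.log (Real.exp 2 + s)) ^ 2) with hηdef
  have hηpos : 0 < η := Real.exp_pos _
  -- key exponential bound
  have hds : μ * (v * s - d) = -((μ * v) * s) := by
    rw [hsdef]; field_simp; ring
  have hexp : Real.exp (μ * (v * s - d)) ≤ Real.exp (a * s₀) * η := by
    rw [hηdef, ← Real.exp_add, hds]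
    apply Real.exp_le_exp.2
    have key := eta_aux a (μ * v) s ha (by positivity) hspos.le
    have hneg : -a * s / (Real.log (Real.exp 2 + s)) ^ 2
        = -(a * s / (Real.log (Real.exp 2 + s)) ^ 2) := by ring
    rw [hneg]
    linarith
  have hFabs : Integrable (fun t => |F t|) := hF.abs
  have hint : Integrable (fun t => |F t| * g t) := by
    have h := hFabs.bdd_mul hgm.aestronglyMeasurable
      (c := 2 * M) (Filter.Eventually.of_forall fun t => by
        rw [Real.norm_eq_abs, abs_of_nonneg (hg0 t)]
        exact (hgb t).trans (min_le_left _ _))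
    simpa [mul_comm] using h
  set S : Set ℝ := {t : ℝ | s < |t|} with hSdef
  have hS : MeasurableSet S := measurableSet_lt measurable_const measurable_abs
  have hsplit : (∫ t in S, |F t| * g t) + (∫ t in Sᶜ, |F t| * g t)
      = ∫ t, |F t| * g t := integral_add_compl hS hint
  -- piece on S
  have hS1 : (∫ t in S, |F t| * g t) ≤ 2 * c' * (M * η) := by
    calc (∫ t in S, |F t| * g t) ≤ ∫ t in S, |F t| * (2 * M) := by
          apply setIntegral_mono_on hint.integrableOn ((hFabs.mul_const _).integrableOn) hS
          intro t _
          exact mul_le_mul_of_nonneg_left ((hgb t).trans (min_le_left _ _)) (abs_nonneg _)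
    _ = (∫ t in S, |F t|) * (2 * M) := by rw [integral_mul_const]
    _ ≤ (c' * η) * (2 * M) := by
          apply mul_le_mul_of_nonneg_right _ (by positivity)
          have := hFtail s hspos.le
          rw [hηdef]
          exact this
    _ = 2 * c' * (M * η) := by ring
  -- piece on Sᶜ
  have hS2 : (∫ t in Sᶜ, |F t| * g t) ≤ c * c₂ * Real.exp (a * s₀) * (M * η) := by
    calc (∫ t in Sᶜ, |F t| * g t)
        ≤ ∫ t in Sᶜ, |F t| * (c * M * Real.exp (μ * (v * s - d))) := by
          apply setIntegral_mono_on hint.integrableOn ((hFabs.mul_const _).integrableOn) hS.compl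
          intro t ht
          have habs : |t| ≤ s := not_lt.mp ht
          have h1 : g t ≤ c * M * Real.exp (μ * (v * |t| - d)) :=
            (hgb t).trans (min_le_right _ _)
          have h2 : Real.exp (μ * (v * |t| - d)) ≤ Real.exp (μ * (v * s - d)) := by
            apply Real.exp_le_exp.2
            nlinarith [mul_le_mul_of_nonneg_left (mul_le_mul_of_nonneg_left habs hv.le) hμ.le]
          apply mul_le_mul_of_nonneg_left _ (abs_nonneg _)
          calc g t ≤ c * M * Real.exp (μ * (v * |t| - d)) := h1
          _ ≤ c * M * Real.exp (μ * (v * s - d)) :=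
              mul_le_mul_of_nonneg_left h2 (by positivity)
    _ = (∫ t in Sᶜ, |F t|) * (c * M * Real.exp (μ * (v * s - d))) := by
          rw [integral_mul_const]
    _ ≤ c₂ * (c * M * Real.exp (μ * (v * s - d))) := by
          apply mul_le_mul_of_nonneg_right _ (by positivity)
          exact (setIntegral_le_integral hFabs
            (Filter.Eventually.of_forall fun t => abs_nonneg _)).trans hFc₂
    _ ≤ c₂ * (c * M * (Real.exp (a * s₀) * η)) := by
          apply mul_le_mul_of_nonneg_left _ hc₂.le
          apply mul_le_mul_of_nonneg_left hexp (by positivity)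
    _ = c * c₂ * Real.exp (a * s₀) * (M * η) := by ring
  have : (∫ t, |F t| * g t) ≤ (c * c₂ * Real.exp (a * s₀) + 2 * c') * (M * η) := by
    rw [← hsplit]; nlinarith
  calc (∫ t, |F t| * g t) ≤ (c * c₂ * Real.exp (a * s₀) + 2 * c') * (M * η) := this
  _ = (c * c₂ * Real.exp (a * s₀) + 2 * c') * M * η := by ring
end

section
/- Let A be an operator on a tensor-product Hilbert space H = H_B ⊗ H_S (finite-dimensional), and define A' = (1/dim(H_S))·(Tr_S A) ⊗ I_S. Suppose that for every unitary U acting only on H_S (i.e., U = I_B ⊗ U_S), ‖[A, U]‖ ≤ δ. Then ‖A - A'‖ ≤ δ, where ‖·‖ is the operator norm. -/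
open scoped Matrix.Norms.L2Operator Kronecker

namespace PartialTraceAux

open Matrix

variable {B S : Type*} [Fintype B] [Fintype S] [DecidableEq B] [DecidableEq S]

/-- Sign associated to a boolean vector. -/
def sgn (ε : S → Bool) (s : S) : ℂ := if ε s then 1 else -1

lemma sgn_mul_self (ε : S → Bool) (s : S) : sgn ε s * sgn ε s = 1 := by
  unfold sgn; split <;> ring

lemma star_sgn (ε : S → Bool) (s : S) : star (sgn ε s) = sgn ε s := by
  unfold sgn; split <;> simp

/-- Signed permutation matrix. -/
def uMat (ε : S → Bool) (σ : Equiv.Perm S) : Matrix S S ℂ :=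
  Matrix.of fun s t => if σ t = s then sgn ε t else 0

lemma star_uMat (ε : S → Bool) (σ : Equiv.Perm S) :
    star (uMat ε σ) = Matrix.of fun s t => if σ s = t then sgn ε s else 0 := by
  ext s t
  simp only [Matrix.star_apply, uMat, Matrix.of_apply]
  split <;> simp [star_sgn]

lemma uMat_mem (ε : S → Bool) (σ : Equiv.Perm S) :
    uMat ε σ ∈ Matrix.unitaryGroup S ℂ := by
  rw [Matrix.mem_unitaryGroup_iff]
  ext s t
  rw [Matrix.mul_apply]
  rw [star_uMat]
  rw [Finset.sum_eq_single (σ.symm s)]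
  · simp only [uMat, Matrix.of_apply, Equiv.apply_symm_apply, if_pos rfl, Matrix.one_apply]
    by_cases h : s = t
    · subst h; simp [sgn_mul_self]
    · simp [h]
  · intro u _ hu
    have h1 : σ u ≠ s := by
      intro h; apply hu; rw [← h]; simp
    simp [uMat, h1]
  · intro h; exact absurd (Finset.mem_univ _) h

/-- The operator on the full space. -/
noncomputable def uFull (ε : S → Bool) (σ : Equiv.Perm S) : Matrix (B × S) (B × S) ℂ :=
  (1 : Matrix B B ℂ) ⊗ₖ uMat ε σ

lemma star_one_kron (M : Matrix S S ℂ) :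
    star ((1 : Matrix B B ℂ) ⊗ₖ M) = (1 : Matrix B B ℂ) ⊗ₖ star M := by
  ext ⟨i, s⟩ ⟨j, t⟩
  simp only [Matrix.star_apply, Matrix.kroneckerMap_apply, Matrix.one_apply]
  by_cases h : i = j
  · subst h; simp
  · simp [h, Ne.symm h]

lemma uFull_mem (ε : S → Bool) (σ : Equiv.Perm S) :
    uFull (B := B) ε σ ∈ unitary (Matrix (B × S) (B × S) ℂ) := by
  have h := uMat_mem ε σ
  constructor
  · rw [uFull, star_one_kron, ← Matrix.mul_kronecker_mul, one_mul, h.1,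
      Matrix.one_kronecker_one]
  · rw [uFull, star_one_kron, ← Matrix.mul_kronecker_mul, one_mul, h.2,
      Matrix.one_kronecker_one]

lemma left_mul_apply (A : Matrix (B × S) (B × S) ℂ) (ε : S → Bool) (σ : Equiv.Perm S)
    (i : B) (s : S) (y : B × S) :
    (uFull (B := B) ε σ * A) (i, s) y = sgn ε (σ.symm s) * A (i, σ.symm s) y := by
  rw [Matrix.mul_apply, Fintype.sum_prod_type]
  rw [Finset.sum_eq_single i]
  · rw [Finset.sum_eq_single (σ.symm s)]
    · simp [uFull, uMat, Matrix.kroneckerMap_apply, Matrix.one_apply]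
    · intro u _ hu
      have h1 : σ u ≠ s := by intro h; apply hu; rw [← h]; simp
      simp [uFull, uMat, Matrix.kroneckerMap_apply, h1]
    · intro h; exact absurd (Finset.mem_univ _) h
  · intro k _ hk
    simp [uFull, Matrix.kroneckerMap_apply, Matrix.one_apply, Ne.symm hk]
  · intro h; exact absurd (Finset.mem_univ _) h

lemma right_mul_apply (M : Matrix (B × S) (B × S) ℂ) (ε : S → Bool) (σ : Equiv.Perm S)
    (x : B × S) (j : B) (t : S) :
    (M * star (uFull (B := B) ε σ)) x (j, t) = sgn ε (σ.symm t) * M x (j, σ.symm t) := by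
  rw [Matrix.mul_apply, Fintype.sum_prod_type]
  rw [uFull, star_one_kron, star_uMat]
  rw [Finset.sum_eq_single j]
  · rw [Finset.sum_eq_single (σ.symm t)]
    · simp [Matrix.kroneckerMap_apply, Matrix.one_apply, mul_comm]
    · intro u _ hu
      have h1 : σ u ≠ t := by intro h; apply hu; rw [← h]; simp
      simp [Matrix.kroneckerMap_apply, h1]
    · intro h; exact absurd (Finset.mem_univ _) h
  · intro k _ hk
    simp [Matrix.kroneckerMap_apply, Matrix.one_apply, hk]
  · intro h; exact absurd (Finset.mem_univ _) h

lemma conj_apply (A : Matrix (B × S) (B × S) ℂ) (ε : S → Bool) (σ : Equiv.Perm S)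
    (i : B) (s : S) (j : B) (t : S) :
    (uFull (B := B) ε σ * A * star (uFull (B := B) ε σ)) (i, s) (j, t)
      = sgn ε (σ.symm s) * sgn ε (σ.symm t) * A (i, σ.symm s) (j, σ.symm t) := by
  rw [right_mul_apply, left_mul_apply]
  ring

/-- Flipping one coordinate of a boolean vector is an involutive permutation. -/
def flipE (q : S) : Equiv.Perm (S → Bool) :=
  Function.Involutive.toPerm (fun ε => Function.update ε q (!(ε q))) (by
    intro ε; funext s
    by_cases h : s = q
    · subst h; simp
    · simp [Function.update_of_ne h])

lemma sgn_flipE_ne (q : S) (ε : S → Bool) {p : S} (h : p ≠ q) :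
    sgn (flipE q ε) p = sgn ε p := by
  simp [flipE, sgn, Function.Involutive.toPerm, Function.update_of_ne h]

lemma sgn_flipE_self (q : S) (ε : S → Bool) :
    sgn (flipE q ε) q = -sgn ε q := by
  simp only [flipE, sgn, Function.Involutive.toPerm, Equiv.coe_fn_mk,
    Function.update_self]
  cases h : ε q <;> simp [h]

lemma sum_sgn_eq_zero {p q : S} (h : p ≠ q) :
    ∑ ε : S → Bool, sgn ε p * sgn ε q = 0 := by
  have key : ∑ ε : S → Bool, sgn ε p * sgn ε q
      = ∑ ε : S → Bool, -(sgn ε p * sgn ε q) := by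
    rw [← Equiv.sum_comp (flipE q) (fun ε => sgn ε p * sgn ε q)]
    refine Finset.sum_congr rfl fun ε _ => ?_
    rw [sgn_flipE_ne q ε h, sgn_flipE_self q ε]
    ring
  rw [Finset.sum_neg_distrib] at key
  have h2 : (∑ ε : S → Bool, sgn ε p * sgn ε q) + ∑ ε : S → Bool, sgn ε p * sgn ε q = 0 := by
    nth_rewrite 1 [key]
    simp
  exact add_self_eq_zero.mp h2

end PartialTraceAux

open PartialTraceAux Matrix in
/-- Haar-averaging / partial-trace approximation: if an operator `A` on `H_B ⊗ H_S`
almost commutes (up to `δ` in operator norm) with every unitary supported on `S`,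
then `A` is `δ`-close to `A' = (1/dim H_S)·(Tr_S A) ⊗ I_S`. -/
theorem partial_trace_approximation
    {B S : Type*} [Fintype B] [Fintype S] [DecidableEq B] [DecidableEq S] [Nonempty S]
    (A : Matrix (B × S) (B × S) ℂ) (δ : ℝ)
    (hδ : ∀ US : Matrix S S ℂ, US ∈ Matrix.unitaryGroup S ℂ →
      ‖A * ((1 : Matrix B B ℂ) ⊗ₖ US) - ((1 : Matrix B B ℂ) ⊗ₖ US) * A‖ ≤ δ) :
    ‖A - (1 / (Fintype.card S : ℂ)) •
        ((Matrix.of fun i j : B => ∑ s : S, A (i, s) (j, s)) ⊗ₖ (1 : Matrix S S ℂ))‖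
      ≤ δ := by
  classical
  set d := Fintype.card S with hd
  haveI : NeZero d := ⟨Fintype.card_ne_zero⟩
  set e : S ≃ Fin d := Fintype.equivFin S with he
  -- the cyclic shift permutations
  set σk : Fin d → Equiv.Perm S :=
    fun k => e.trans ((Equiv.addRight k).trans e.symm) with hσk
  set ι := ((S → Bool) × Fin d) with hι
  set M : Matrix (B × S) (B × S) ℂ :=
    (Matrix.of fun i j : B => ∑ s : S, A (i, s) (j, s)) ⊗ₖ (1 : Matrix S S ℂ) with hM
  set T : ι → Matrix (B × S) (B × S) ℂ :=
    fun g => uFull (B := B) g.1 (σk g.2) * A * star (uFull (B := B) g.1 (σk g.2)) with hT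
  -- the twirl identity
  have hsum : ∑ g : ι, T g = ((2 : ℂ) ^ d) • M := by
    ext ⟨i, s⟩ ⟨j, t⟩
    rw [Matrix.sum_apply]
    have : ∀ g : ι, T g (i, s) (j, t)
        = sgn g.1 ((σk g.2).symm s) * sgn g.1 ((σk g.2).symm t)
            * A (i, (σk g.2).symm s) (j, (σk g.2).symm t) := by
      intro g; exact conj_apply A g.1 (σk g.2) i s j t
    simp only [this]
    rw [Fintype.sum_prod_type, Finset.sum_comm]
    by_cases hst : s = t
    · subst hst
      have : ∀ k : Fin d, ∑ ε : S → Bool,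
          sgn ε ((σk k).symm s) * sgn ε ((σk k).symm s)
            * A (i, (σk k).symm s) (j, (σk k).symm s)
          = (2 : ℂ) ^ d • A (i, (σk k).symm s) (j, (σk k).symm s) := by
        intro k
        simp only [sgn_mul_self, one_mul]
        rw [Finset.sum_const, Finset.card_univ, Fintype.card_fun, Fintype.card_bool]
        simp [nsmul_eq_mul, hd]
      simp only [this]
      rw [← Finset.smul_sum]
      have hre : ∑ k : Fin d, A (i, (σk k).symm s) (j, (σk k).symm s)
          = ∑ u : S, A (i, u) (j, u) := by
        have hEq : ∀ k : Fin d, (σk k).symm s = ((Equiv.subLeft (e s)).trans e.symm) k := by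
          intro k
          simp [hσk, Equiv.subLeft, sub_eq_add_neg]
        calc ∑ k : Fin d, A (i, (σk k).symm s) (j, (σk k).symm s)
            = ∑ k : Fin d, A (i, ((Equiv.subLeft (e s)).trans e.symm) k)
                (j, ((Equiv.subLeft (e s)).trans e.symm) k) := by
              refine Finset.sum_congr rfl fun k _ => by rw [hEq k]
          _ = ∑ u : S, A (i, u) (j, u) :=
              Equiv.sum_comp ((Equiv.subLeft (e s)).trans e.symm)
                (fun u => A (i, u) (j, u))
      rw [hre]
      simp [hM, Matrix.smul_apply, Matrix.kroneckerMap_apply, Matrix.one_apply,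
        smul_eq_mul]
    · have : ∀ k : Fin d, ∑ ε : S → Bool,
          sgn ε ((σk k).symm s) * sgn ε ((σk k).symm t)
            * A (i, (σk k).symm s) (j, (σk k).symm t) = 0 := by
        intro k
        rw [← Finset.sum_mul]
        rw [sum_sgn_eq_zero (fun h => hst ((σk k).symm.injective h)), zero_mul]
      simp only [this]
      simp [hM, Matrix.smul_apply, Matrix.kroneckerMap_apply, Matrix.one_apply, hst]
  -- cardinality
  have hcard : (Fintype.card ι : ℂ) = (2 : ℂ) ^ d * d := by
    simp [hι, Fintype.card_prod, Fintype.card_fun, Fintype.card_bool, hd]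
  have hd0 : (d : ℂ) ≠ 0 := by
    exact_mod_cast (Nat.cast_ne_zero (R := ℂ)).mpr (NeZero.ne d)
  have h20 : ((2 : ℂ) ^ d) ≠ 0 := pow_ne_zero _ two_ne_zero
  have hN0 : (Fintype.card ι : ℂ) ≠ 0 := by
    rw [hcard]; exact mul_ne_zero h20 hd0
  -- key decomposition
  have hkey : A - (1 / (d : ℂ)) • M
      = (1 / (Fintype.card ι : ℂ)) • ∑ g : ι, (A - T g) := by
    rw [Finset.sum_sub_distrib, hsum, Finset.sum_const, Finset.card_univ]
    rw [smul_sub]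
    have h1 : (1 / (Fintype.card ι : ℂ)) • ((Fintype.card ι) • A) = A := by
      rw [← Nat.cast_smul_eq_nsmul ℂ, smul_smul, one_div_mul_cancel hN0, one_smul]
    have h2 : (1 / (Fintype.card ι : ℂ)) • (((2 : ℂ) ^ d) • M)
        = (1 / (d : ℂ)) • M := by
      rw [smul_smul, hcard]
      congr 1
      field_simp
    rw [h1, h2]
  rw [hkey]
  -- norm estimate
  have hnorm_each : ∀ g : ι, ‖A - T g‖ ≤ δ := by
    intro g
    have hmem := uFull_mem (B := B) g.1 (σk g.2)
    have huni : uFull (B := B) g.1 (σk g.2) * star (uFull (B := B) g.1 (σk g.2)) = 1 :=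
      hmem.2
    have hrw : (A * uFull (B := B) g.1 (σk g.2) - uFull (B := B) g.1 (σk g.2) * A)
        * star (uFull (B := B) g.1 (σk g.2)) = A - T g := by
      rw [sub_mul, mul_assoc A, huni, mul_one, hT]
    rw [← hrw]
    rw [CStarRing.norm_mul_mem_unitary _ (Unitary.star_mem hmem)]
    exact hδ _ (uMat_mem g.1 (σk g.2))
  calc ‖(1 / (Fintype.card ι : ℂ)) • ∑ g : ι, (A - T g)‖
      = ‖(1 / (Fintype.card ι : ℂ))‖ * ‖∑ g : ι, (A - T g)‖ := norm_smul _ _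
    _ ≤ ‖(1 / (Fintype.card ι : ℂ))‖ * ∑ g : ι, ‖A - T g‖ := by
        apply mul_le_mul_of_nonneg_left (norm_sum_le _ _) (norm_nonneg _)
    _ ≤ ‖(1 / (Fintype.card ι : ℂ))‖ * ((Fintype.card ι) * δ) := by
        apply mul_le_mul_of_nonneg_left _ (norm_nonneg _)
        calc ∑ g : ι, ‖A - T g‖ ≤ ∑ _g : ι, δ :=
              Finset.sum_le_sum fun g _ => hnorm_each g
          _ = (Fintype.card ι) * δ := by
              rw [Finset.sum_const, Finset.card_univ, nsmul_eq_mul]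
    _ = δ := by
        have : ‖(1 / (Fintype.card ι : ℂ))‖ = 1 / (Fintype.card ι : ℝ) := by
          simp
        rw [this]
        have hNR : (Fintype.card ι : ℝ) ≠ 0 := by
          exact_mod_cast Fintype.card_ne_zero (α := ι)
        field_simp
end
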